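/- Lenzing's criterion: Let C be an essentially small category, D a full subcategory of C, and F : C^op → Set a presheaf which is a filtered colimit of representable presheaves (an ind-object). Then F is isomorphic to a colimit colim_{j∈J} yoneda(G(j)) for some small filtered category J and some functor G : J ⥤ C taking all its values in D, if and only if every morphism of presheaves yoneda(C₀) → F with C₀ in C factors as yoneda(C₀) → yoneda(D₀) → F for some object D₀ of D and some morphism C₀ → D₀ in C. -/

import Mathlib

universe u

open CategoryTheory CategoryTheory.Limits Opposite

/-- Lenzing's criterion: an ind-object `F` over `C` is a filtered colimit of
representables coming from a full subcategory `D ⊆ C` (given by the set of objects `S`) if and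
only if every morphism `yoneda C₀ ⟶ F` with `C₀ ∈ C` factors through `yoneda D₀` for some
`D₀ ∈ D`. -/
theorem statement_2 {C : Type u} [SmallCategory C] (S : Set C) (F : Cᵒᵖ ⥤ Type u)
    (hF : ∃ (I : Type u) (_ : SmallCategory I) (_ : IsFiltered I) (X : I ⥤ C),
      Nonempty (colimit (X ⋙ yoneda) ≅ F)) :
    (∃ (J : Type u) (_ : SmallCategory J) (_ : IsFiltered J) (G : J ⥤ C),
        (∀ j : J, G.obj j ∈ S) ∧ Nonempty (colimit (G ⋙ yoneda) ≅ F)) ↔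
      (∀ (C₀ : C) (f : yoneda.obj C₀ ⟶ F), ∃ (D₀ : C) (_ : D₀ ∈ S) (g : C₀ ⟶ D₀)
        (h : yoneda.obj D₀ ⟶ F), f = yoneda.map g ≫ h) := by
  constructor
  · rintro ⟨J, _, _, G, hG, ⟨e⟩⟩ C₀ f
    obtain ⟨j, y, hy⟩ := Types.jointly_surjective'
      ((colimitObjIsoColimitCompEvaluation (G ⋙ yoneda) (op C₀)).hom (yonedaEquiv (f ≫ e.inv)))
    refine ⟨G.obj j, hG j, y, colimit.ι (G ⋙ yoneda) j ≫ e.hom, ?_⟩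
    have key : yoneda.map y ≫ colimit.ι (G ⋙ yoneda) j = f ≫ e.inv := by
      apply yonedaEquiv.injective
      rw [yonedaEquiv_comp, yonedaEquiv_yoneda_map]
      calc (colimit.ι (G ⋙ yoneda) j).app (op C₀) y
          = (colimitObjIsoColimitCompEvaluation (G ⋙ yoneda) (op C₀)).inv
              (colimit.ι ((G ⋙ yoneda) ⋙ (evaluation Cᵒᵖ (Type u)).obj (op C₀)) j y) :=
            (ConcreteCategory.congr_hom (colimitObjIsoColimitCompEvaluation_ι_inv (G ⋙ yoneda) j (op C₀)) y).symm
        _ = (colimitObjIsoColimitCompEvaluation (G ⋙ yoneda) (op C₀)).inv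
              ((colimitObjIsoColimitCompEvaluation (G ⋙ yoneda) (op C₀)).hom
                (yonedaEquiv (f ≫ e.inv))) := congrArg _ hy
        _ = yonedaEquiv (f ≫ e.inv) :=
            Iso.hom_inv_id_apply (colimitObjIsoColimitCompEvaluation (G ⋙ yoneda) (op C₀))
              (yonedaEquiv (f ≫ e.inv))
    rw [← Category.assoc, key, Category.assoc, Iso.inv_hom_id, Category.comp_id]
  · intro h
    obtain ⟨I, _, _, X, ⟨e⟩⟩ := hF
    have hind : IsIndObject F := IsIndObject.map e.hom
      (IsIndObject.mk (IndObjectPresentation.ofCocone (colimit.cocone (X ⋙ yoneda))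
        (colimit.isColimit _)))
    have hfil : IsFiltered (CostructuredArrow yoneda F) := hind.isFiltered
    let ι := ObjectProperty.ι (fun p : CostructuredArrow yoneda F => p.left ∈ S)
    have hexists : ∀ p : CostructuredArrow yoneda F,
        ∃ q, Nonempty (p ⟶ ι.obj q) := by
      intro p
      obtain ⟨D₀, hD₀, g, h', hfac⟩ := h p.left p.hom
      exact ⟨⟨CostructuredArrow.mk h', hD₀⟩, ⟨CostructuredArrow.homMk g hfac.symm⟩⟩
    have hfe : Functor.Final ι :=
      Functor.final_of_exists_of_isFiltered_of_fullyFaithful ι hexists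
    have hJfe : IsFilteredOrEmpty (ObjectProperty.FullSubcategory
        (fun p : CostructuredArrow yoneda F => p.left ∈ S)) :=
      IsFilteredOrEmpty.of_exists_of_isFiltered_of_fullyFaithful ι hexists
    have hne : Nonempty (ObjectProperty.FullSubcategory
        (fun p : CostructuredArrow yoneda F => p.left ∈ S)) :=
      ⟨(hexists (IsFiltered.nonempty.some)).choose⟩
    have hJ : IsFiltered (ObjectProperty.FullSubcategory
        (fun p : CostructuredArrow yoneda F => p.left ∈ S)) := { }
    refine ⟨_, inferInstance, hJ, ι ⋙ CostructuredArrow.proj yoneda F,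
      fun j => j.2, ⟨?_⟩⟩
    let c := (Presheaf.tautologicalCocone F).whisker ι
    have hc : IsColimit c := (Functor.Final.isColimitWhiskerEquiv ι _).symm
      (Presheaf.isColimitTautologicalCocone F)
    exact (colimit.isColimit _).coconePointUniqueUpToIso hc
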